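/- Let κ be a regular uncountable cardinal and assume principle E⁻(κ). Then for every family 𝓐 of subsets of ℕ with |𝓐| = κ and every natural number k ≥ 1, either (a) the set I_k(𝓐) = {⋂𝓐' : 𝓐' is a k-element subfamily of 𝓐} has cardinality κ, or (b) there is a subfamily 𝓑 ⊆ 𝓐 of cardinality κ such that I_k(𝓑) is countable. -/

import Mathlib

open Cardinal

/-- `C` is closed and unbounded (club) in the ordinal `o`. -/
def ClubIn (o : Ordinal) (C : Set Ordinal) : Prop :=
  C ⊆ Set.Iio o ∧ (∀ α < o, ∃ β ∈ C, α < β) ∧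
    ∀ α < o, 0 < α → (∀ β < α, ∃ γ ∈ C, β < γ ∧ γ < α) → α ∈ C

/-- `S` is a stationary subset of the ordinal `o`: it meets every club subset of `o`. -/
def StationaryIn (o : Ordinal) (S : Set Ordinal) : Prop :=
  S ⊆ Set.Iio o ∧ ∀ C, ClubIn o C → (S ∩ C).Nonempty

/-- `S` is a cofinal (unbounded) subset of the ordinal `o`. -/
def CofinalIn (o : Ordinal) (S : Set Ordinal) : Prop :=
  S ⊆ Set.Iio o ∧ ∀ α < o, ∃ β ∈ S, α < β

/-- For a matrix `A` of subsets of `ℕ`, a finite sequence `t ∈ ω^{<ω}` and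
`s : {0,…,|t|-1} → Ordinal`, this is `A[s,t] = ⋂_{i<|t|} A(s i, t i)`. -/
def MatInt (A : Ordinal → ℕ → Set ℕ) (t : List ℕ) (s : Fin t.length → Ordinal) : Set ℕ :=
  ⋂ i, A (s i) (t.get i)
/-- Principle E⁻(κ). -/
def PrincipleEminus (κ : Cardinal) : Prop :=
  ∀ (T : Set (List ℕ)) (A : Ordinal → ℕ → Set ℕ),
    (∃ S : Set Ordinal, CofinalIn κ.ord S ∧
      {X : Set ℕ | ∃ t ∈ T, ∃ s : Fin (List.length t) → Ordinal,
        Function.Injective s ∧ (∀ i, s i ∈ S) ∧ X = MatInt A t s}.Countable) ∨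
    (∃ t ∈ T, ∃ D : Fin t.length → Set Ordinal,
      (∀ i, CofinalIn κ.ord (D i)) ∧
      ∀ s₀ s₁ : Fin t.length → Ordinal, Function.Injective s₀ → Function.Injective s₁ →
        (∀ i, s₀ i ∈ D i) → (∀ i, s₁ i ∈ D i) → (∀ i, s₀ i ≠ s₁ i) →
          MatInt A t s₀ ≠ MatInt A t s₁)

/-- `I_k(𝓐)`: the set of intersections of k-element subfamilies of 𝓐. -/
def Ik (𝓐 : Set (Set ℕ)) (k : ℕ) : Set (Set ℕ) :=
  {X : Set ℕ | ∃ F : Finset (Set ℕ), ↑F ⊆ 𝓐 ∧ F.card = k ∧ X = ⋂₀ (F : Set (Set ℕ))}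

/-! ### Auxiliary material -/

lemma iInter_equiv_sInter {F : Finset (Set ℕ)} {n : ℕ} (w : Fin n ≃ {x // x ∈ F})
    (v : Fin n → Set ℕ) (hv : ∀ i, v i = (w i : Set ℕ)) :
    ⋂ i, v i = ⋂₀ (F : Set (Set ℕ)) := by
  ext x
  simp only [Set.mem_iInter, Set.mem_sInter, Finset.mem_coe]
  constructor
  · intro h X hX
    have := h (w.symm ⟨X, hX⟩)
    rwa [hv, Equiv.apply_symm_apply] at this
  · intro h i
    rw [hv]
    exact h _ (w i).2

/-- A transfinite "chain" function: `auxChain u α` dominates `u (auxChain u β) + 1`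
for every `β < α`. -/
noncomputable def auxChain (u : Ordinal → Ordinal) : Ordinal → Ordinal :=
  Ordinal.lt_wf.fix fun α ih => Ordinal.bsup α fun β h => u (ih β h) + 1

lemma auxChain_eq (u : Ordinal → Ordinal) (α : Ordinal) :
    auxChain u α = Ordinal.bsup α fun β _ => u (auxChain u β) + 1 :=
  WellFounded.fix_eq _ _ _

lemma auxChain_lt_ord {κ : Cardinal.{0}} (hreg : κ.IsRegular) {u : Ordinal → Ordinal}
    (hu : ∀ x, x < κ.ord → u x < κ.ord) :
    ∀ α, α < κ.ord → auxChain u α < κ.ord := by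
  intro α
  induction α using Ordinal.induction with
  | _ α ih =>
    intro hα
    rw [auxChain_eq]
    refine Cardinal.bsup_lt_ord_of_isRegular hreg (Cardinal.lt_ord.1 hα) ?_
    intro β hβ
    have h1 : auxChain u β < κ.ord := ih β hβ (hβ.trans hα)
    have h2 := hu _ h1
    rw [Ordinal.add_one_eq_succ]
    exact (Cardinal.isSuccLimit_ord hreg.aleph0_le).succ_lt h2

lemma lt_auxChain {u : Ordinal → Ordinal} {β α : Ordinal} (h : β < α) :
    u (auxChain u β) < auxChain u α := by
  have hle := Ordinal.le_bsup (fun β _ => u (auxChain u β) + 1) β h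
  rw [← auxChain_eq] at hle
  refine lt_of_lt_of_le ?_ hle
  rw [Ordinal.add_one_eq_succ]
  exact Order.lt_succ _

/-- Under E⁻(κ), for any κ-sized family 𝓐 of subsets of ℕ and `k ≥ 1`, either
`I_k(𝓐)` has cardinality κ, or some κ-sized subfamily 𝓑 has `I_k(𝓑)` countable. -/
theorem statement_15 (κ : Cardinal.{0}) (hreg : κ.IsRegular) (hunc : ℵ₀ < κ)
    (hE : PrincipleEminus κ) (k : ℕ) (hk : 1 ≤ k)
    (𝓐 : Set (Set ℕ)) (hcard : #𝓐 = κ) :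
    #(Ik 𝓐 k) = κ ∨ (∃ 𝓑 ⊆ 𝓐, #𝓑 = κ ∧ (Ik 𝓑 k).Countable) := by
  classical
  -- enumeration of 𝓐 by ordinals below κ.ord
  have hfe : Nonempty ({x // x ∈ Set.Iio κ.ord} ≃ {x // x ∈ 𝓐}) := by
    rw [← Cardinal.lift_mk_eq']
    rw [Ordinal.mk_Iio_ordinal, Cardinal.card_ord, hcard]
    simp
  obtain ⟨e⟩ := hfe
  set f : Ordinal → Set ℕ := fun α => if h : α < κ.ord then ((e ⟨α, h⟩ : {x // x ∈ 𝓐}) : Set ℕ) else ∅ with hf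
  have hfval : ∀ (α) (h : α < κ.ord), f α = ((e ⟨α, h⟩ : {x // x ∈ 𝓐}) : Set ℕ) := fun α h => dif_pos h
  have hfmem : ∀ α, α < κ.ord → f α ∈ 𝓐 := fun α h => by rw [hfval α h]; exact (e ⟨α, h⟩).2
  have hfinj : ∀ a b, a < κ.ord → b < κ.ord → f a = f b → a = b := by
    intro a b ha hb hab
    rw [hfval a ha, hfval b hb] at hab
    have := e.injective (Subtype.ext hab)
    exact congrArg Subtype.val this
  set t0 : List ℕ := List.replicate k 0 with ht0
  have hlen : t0.length = k := List.length_replicate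
  have hpos : 0 < t0.length := by rw [hlen]; exact hk
  set A : Ordinal → ℕ → Set ℕ := fun α _ => f α with hA
  rcases hE {t0} A with ⟨S, hScof, hcnt⟩ | ⟨t', ht', D, hDcof, hdist⟩
  · -- Case (b)
    right
    refine ⟨f '' S, ?_, ?_, ?_⟩
    · rintro _ ⟨α, hαS, rfl⟩
      exact hfmem α (hScof.1 hαS)
    · refine le_antisymm ?_ ?_
      · refine le_trans (Cardinal.mk_le_mk_of_subset ?_) hcard.le
        rintro _ ⟨α, hαS, rfl⟩
        exact hfmem α (hScof.1 hαS)
      · by_contra hlt'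
        have hBlt : #{x // x ∈ f '' S} < κ := not_le.1 hlt'
        have hb : ∀ b : {x // x ∈ f '' S}, ∃ x, x ∈ S ∧ f x = ↑b := fun b => b.2
        choose pre hpreS hpref using hb
        have hsup : (⨆ b, pre b) < κ.ord :=
          Cardinal.iSup_lt_ord_of_isRegular hreg hBlt fun b => hScof.1 (hpreS b)
        obtain ⟨γ, hγS, hγgt⟩ := hScof.2 _ hsup
        set b : {x // x ∈ f '' S} := ⟨f γ, Set.mem_image_of_mem f hγS⟩ with hbdef
        have hpb : pre b = γ := hfinj _ _ (hScof.1 (hpreS b)) (hScof.1 hγS) (hpref b)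
        have : γ ≤ ⨆ b, pre b := hpb ▸ le_ciSup (Ordinal.bddAbove_range pre) b
        exact absurd hγgt (not_lt.2 this)
    · refine Set.Countable.mono ?_ hcnt
      rintro X ⟨F, hFB, hFcard, rfl⟩
      have hlF : t0.length = F.card := by rw [hFcard, hlen]
      set w : Fin t0.length ≃ {x // x ∈ F} := (finCongr hlF).trans F.equivFin.symm with hw
      have hpre : ∀ i : Fin t0.length, ∃ α, α ∈ S ∧ f α = (w i : Set ℕ) := fun i => hFB (w i).2
      choose s hsS hsf using hpre
      refine ⟨t0, rfl, s, ?_, hsS, ?_⟩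
      · intro i j hij
        have hvw : (w i : Set ℕ) = (w j : Set ℕ) := by rw [← hsf i, ← hsf j, hij]
        exact w.injective (Subtype.ext hvw)
      · have hM : MatInt A t0 s = ⋂ i, f (s i) := rfl
        rw [hM, iInter_equiv_sInter w _ hsf]
  · -- Case (a)
    left
    have ht's : t' = t0 := ht'
    subst ht's
    -- upper bound
    have hle : #(Ik 𝓐 k) ≤ κ := by
      have hsub : Ik 𝓐 k ⊆ Set.range fun v : Fin k → {x // x ∈ 𝓐} => ⋂ i, ((v i : Set ℕ)) := by
        rintro X ⟨F, hF, hFc, rfl⟩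
        set w : Fin k ≃ {x // x ∈ F} := (finCongr hFc.symm).trans F.equivFin.symm with hw
        refine ⟨fun i => ⟨(w i : Set ℕ), hF (w i).2⟩, ?_⟩
        exact iInter_equiv_sInter w _ fun i => rfl
      calc #(Ik 𝓐 k) ≤ #(Set.range fun v : Fin k → {x // x ∈ 𝓐} => ⋂ i, ((v i : Set ℕ))) :=
            Cardinal.mk_le_mk_of_subset hsub
        _ ≤ #(Fin k → {x // x ∈ 𝓐}) := Cardinal.mk_range_le
        _ = κ ^ (k : Cardinal) := by rw [← Cardinal.power_def, Cardinal.mk_fin, hcard]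
        _ = κ := by rw [Cardinal.power_natCast]; exact Cardinal.power_nat_eq hunc.le hk
    -- lower bound
    have hκ0 : (0 : Ordinal) < κ.ord := hreg.ord_pos
    have hlim := Cardinal.isSuccLimit_ord hreg.aleph0_le
    have hqex : ∀ (i : Fin t0.length) (α : Ordinal),
        ∃ β, (α < κ.ord → β ∈ D i ∧ α < β) ∧ β < κ.ord := by
      intro i α
      by_cases h : α < κ.ord
      · obtain ⟨β, hβ1, hβ2⟩ := (hDcof i).2 α h
        exact ⟨β, fun _ => ⟨hβ1, hβ2⟩, (hDcof i).1 hβ1⟩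
      · exact ⟨0, fun h' => absurd h' h, hκ0⟩
    choose q hq1 hq2 using hqex
    set g : Ordinal → ℕ → Ordinal := fun x n =>
      Nat.rec (q ⟨0, hpos⟩ x)
        (fun m ih => if h : m + 1 < t0.length then q ⟨m + 1, h⟩ ih else ih + 1) n with hg
    have hgord : ∀ x, x < κ.ord → ∀ n, g x n < κ.ord := by
      intro x hx n
      induction n with
      | zero => exact hq2 _ _
      | succ m ih =>
        show (if h : m + 1 < t0.length then q ⟨m + 1, h⟩ (g x m) else g x m + 1) < κ.ord
        split_ifs with h
        · exact hq2 _ _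
        · rw [Ordinal.add_one_eq_succ]; exact hlim.succ_lt ih
    have hgmono : ∀ x, x < κ.ord → ∀ n, g x n < g x (n + 1) := by
      intro x hx n
      show g x n < (if h : n + 1 < t0.length then q ⟨n + 1, h⟩ (g x n) else g x n + 1)
      split_ifs with h
      · exact (hq1 _ _ (hgord x hx n)).2
      · rw [Ordinal.add_one_eq_succ]; exact Order.lt_succ _
    have hgsm : ∀ x, x < κ.ord → StrictMono (g x) := fun x hx =>
      strictMono_nat_of_lt_succ (hgmono x hx)
    have hgD : ∀ x, x < κ.ord → ∀ (n) (h : n < t0.length), g x n ∈ D ⟨n, h⟩ := by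
      intro x hx n h
      match n with
      | 0 => exact (hq1 ⟨0, hpos⟩ x hx).1
      | Nat.succ m =>
        show (if h' : m + 1 < t0.length then q ⟨m + 1, h'⟩ (g x m) else g x m + 1) ∈ D ⟨m + 1, h⟩
        rw [dif_pos h]
        exact (hq1 _ _ (hgord x hx m)).1
    have hgx0 : ∀ x, x < κ.ord → x < g x 0 := fun x hx => (hq1 _ _ hx).2
    set u : Ordinal → Ordinal := fun x => g x t0.length with hu
    have huord : ∀ x, x < κ.ord → u x < κ.ord := fun x hx => hgord x hx _
    set c : Ordinal → Ordinal := auxChain u with hc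
    have hcord : ∀ α, α < κ.ord → c α < κ.ord := auxChain_lt_ord hreg huord
    -- the enumeration of κ.ord by its toType
    set E := (Ordinal.ToType.mk (o := κ.ord)).symm with hE'
    set β : κ.ord.ToType → Ordinal := fun x => (E x).1 with hβ
    have hβlt : ∀ x, β x < κ.ord := fun x => (E x).2
    have hβinj : Function.Injective β := fun x y h => E.injective (Subtype.ext h)
    set s : κ.ord.ToType → Fin t0.length → Ordinal := fun x i => g (c (β x)) i.1 with hs
    have hz : ∀ x, c (β x) < κ.ord := fun x => hcord _ (hβlt x)
    have hsinj : ∀ x, Function.Injective (s x) := fun x i j h =>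
      Fin.ext ((hgsm _ (hz x)).injective h)
    have hsD : ∀ x i, s x i ∈ D i := by
      intro x i
      have := hgD _ (hz x) i.1 i.2
      simpa using this
    have hsord : ∀ x i, s x i < κ.ord := fun x i => (hDcof i).1 (hsD x i)
    have hsep : ∀ x y, β x < β y → ∀ i, s x i < s y i := by
      intro x y hxy i
      have h1 : s x i < u (c (β x)) := (hgsm _ (hz x)) i.2
      have h2 : u (c (β x)) < c (β y) := lt_auxChain hxy
      have h3 : c (β y) < g (c (β y)) 0 := hgx0 _ (hz y)
      have h4 : g (c (β y)) 0 ≤ s y i := (hgsm _ (hz y)).monotone (Nat.zero_le _)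
      exact ((h1.trans h2).trans h3).trans_le h4
    set Θ : κ.ord.ToType → Set ℕ := fun x => MatInt A t0 (s x) with hΘ
    have hΘinj : Function.Injective Θ := by
      intro x y hxy
      by_contra hne
      have hβne : β x ≠ β y := fun h => hne (hβinj h)
      rcases lt_or_gt_of_ne hβne with h | h
      · exact hdist (s x) (s y) (hsinj x) (hsinj y) (hsD x) (hsD y)
          (fun i => (hsep x y h i).ne) hxy
      · exact hdist (s y) (s x) (hsinj y) (hsinj x) (hsD y) (hsD x)
          (fun i => (hsep y x h i).ne) hxy.symm
    have hΘmem : ∀ x, Θ x ∈ Ik 𝓐 k := by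
      intro x
      have hfs_inj : Function.Injective fun i : Fin t0.length => f (s x i) := by
        intro i j h
        exact hsinj x (hfinj _ _ (hsord x i) (hsord x j) h)
      refine ⟨Finset.image (fun i => f (s x i)) Finset.univ, ?_, ?_, ?_⟩
      · intro y hy
        rw [Finset.coe_image, Finset.coe_univ, Set.image_univ] at hy
        obtain ⟨i, rfl⟩ := hy
        exact hfmem _ (hsord x i)
      · rw [Finset.card_image_of_injective _ hfs_inj, Finset.card_univ, Fintype.card_fin, hlen]
      · have hI : ⋂₀ ((Finset.image (fun i => f (s x i)) Finset.univ : Finset (Set ℕ)) :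
            Set (Set ℕ)) = ⋂ i, f (s x i) := by
          rw [Finset.coe_image, Finset.coe_univ, Set.sInter_image, Set.biInter_univ]
        rw [hI]
        rfl
    have hge : κ ≤ #(Ik 𝓐 k) := by
      have hinj : Function.Injective fun x : κ.ord.ToType => (⟨Θ x, hΘmem x⟩ : (Ik 𝓐 k)) := by
        intro x y h
        exact hΘinj (congrArg Subtype.val h)
      have := Cardinal.mk_le_of_injective hinj
      rwa [Cardinal.mk_toType, Cardinal.card_ord] at this
    exact le_antisymm hle hge
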